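/- Let 0 < a < 1, x > 0, y > 0 with max{y, x, ay/x} < 1. Then there exists a Borel probability measure μ on [0,1]² such that ∬ s^{k₁} dμ = x² for all k₁ ≥ 1, ∬ t^{k₂} dμ = y² for all k₂ ≥ 1, and ∬ s^{k₁} t^{k₂} dμ = a²y² for all k₁ ≥ 1, k₂ ≥ 1, if and only if y ≤ √( (1−x²) / (1−a²) ). -/

import Mathlib

open MeasureTheory

lemma stmt12_dirac_int {f : ℝ × ℝ → ℝ} (hf : Measurable f) (p : ℝ × ℝ) :
    Integrable f (Measure.dirac p) := by
  refine ⟨hf.aestronglyMeasurable, ?_⟩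
  simp [HasFiniteIntegral, lintegral_dirac]

lemma stmt12_key (m00 m10 m01 m11 : ℝ) (h00 : 0 ≤ m00) (h10 : 0 ≤ m10)
    (h01 : 0 ≤ m01) (h11 : 0 ≤ m11) {f : ℝ × ℝ → ℝ} (hf : Measurable f) :
    ∫ p, f p ∂(ENNReal.ofReal m00 • Measure.dirac ((0:ℝ),(0:ℝ))
        + ENNReal.ofReal m10 • Measure.dirac ((1:ℝ),(0:ℝ))
        + ENNReal.ofReal m01 • Measure.dirac ((0:ℝ),(1:ℝ))
        + ENNReal.ofReal m11 • Measure.dirac ((1:ℝ),(1:ℝ)))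
      = m00 * f (0,0) + m10 * f (1,0) + m01 * f (0,1) + m11 * f (1,1) := by
  have I : ∀ (c : ℝ) (p : ℝ × ℝ), Integrable f (ENNReal.ofReal c • Measure.dirac p) :=
    fun c p => (stmt12_dirac_int hf p).smul_measure ENNReal.ofReal_ne_top
  rw [integral_add_measure (((I m00 _).add_measure (I m10 _)).add_measure (I m01 _)) (I m11 _),
    integral_add_measure ((I m00 _).add_measure (I m10 _)) (I m01 _),
    integral_add_measure (I m00 _) (I m10 _)]
  simp [integral_smul_measure, integral_dirac, ENNReal.toReal_ofReal, h00, h10, h01, h11,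
    smul_eq_mul]


/-- Subnormality of the second family of 2-variable weighted shifts (Figure 3):
an interpolating Berger measure on `[0,1]²` exists iff `y ≤ √((1−x²)/(1−a²))`. -/
theorem stmt12 (a x y : ℝ) (ha₀ : 0 < a) (ha₁ : a < 1) (hx : 0 < x) (hy : 0 < y)
    (hx₁ : x < 1) (hy₁ : y < 1) (hayx : a * y / x < 1) :
    (∃ μ : Measure (ℝ × ℝ), IsProbabilityMeasure μ ∧
        μ (Set.Icc (0 : ℝ) 1 ×ˢ Set.Icc (0 : ℝ) 1)ᶜ = 0 ∧
        (∀ k₁ : ℕ, 1 ≤ k₁ → ∫ p, p.1 ^ k₁ ∂μ = x ^ 2) ∧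
        (∀ k₂ : ℕ, 1 ≤ k₂ → ∫ p, p.2 ^ k₂ ∂μ = y ^ 2) ∧
        (∀ k₁ k₂ : ℕ, 1 ≤ k₁ → 1 ≤ k₂ →
          ∫ p, p.1 ^ k₁ * p.2 ^ k₂ ∂μ = a ^ 2 * y ^ 2)) ↔
      y ≤ Real.sqrt ((1 - x ^ 2) / (1 - a ^ 2)) := by
  have ha2 : (0:ℝ) < 1 - a ^ 2 := by nlinarith
  constructor
  · rintro ⟨μ, hprob, hnull, h1, h2, h12⟩
    have hμ1 := h1 1 le_rfl
    have hμ2 := h2 1 le_rfl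
    have hμ12 := h12 1 1 le_rfl le_rfl
    simp only [pow_one] at hμ1 hμ2 hμ12
    have hae : ∀ᵐ p ∂μ, p ∈ Set.Icc (0:ℝ) 1 ×ˢ Set.Icc (0:ℝ) 1 := by
      rw [ae_iff]
      exact hnull
    have hint1 : Integrable (fun p : ℝ × ℝ => p.1) μ := by
      refine Integrable.mono' (integrable_const 1) measurable_fst.aestronglyMeasurable ?_
      filter_upwards [hae] with p hp
      obtain ⟨⟨h0, h1'⟩, _⟩ := hp
      rw [Real.norm_eq_abs, abs_le]; constructor <;> linarith
    have hint2 : Integrable (fun p : ℝ × ℝ => p.2) μ := by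
      refine Integrable.mono' (integrable_const 1) measurable_snd.aestronglyMeasurable ?_
      filter_upwards [hae] with p hp
      obtain ⟨_, h0, h1'⟩ := hp
      rw [Real.norm_eq_abs, abs_le]; constructor <;> linarith
    have hint12 : Integrable (fun p : ℝ × ℝ => p.1 * p.2) μ := by
      refine Integrable.mono' (integrable_const 1)
        (measurable_fst.mul measurable_snd).aestronglyMeasurable ?_
      filter_upwards [hae] with p hp
      obtain ⟨⟨h0, h1'⟩, h0', h1''⟩ := hp
      rw [Real.norm_eq_abs, abs_le]; constructor <;> nlinarith
    have hnn : 0 ≤ ∫ p : ℝ × ℝ, (1 - p.1 - p.2 + p.1 * p.2) ∂μ := by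
      refine integral_nonneg_of_ae ?_
      filter_upwards [hae] with p hp
      obtain ⟨⟨h0, h1'⟩, h0', h1''⟩ := hp
      have : (0:ℝ) ≤ (1 - p.1) * (1 - p.2) :=
        mul_nonneg (by linarith) (by linarith)
      show (0:ℝ) ≤ 1 - p.1 - p.2 + p.1 * p.2
      nlinarith
    have hcalc : ∫ p : ℝ × ℝ, (1 - p.1 - p.2 + p.1 * p.2) ∂μ
        = 1 - x ^ 2 - y ^ 2 + a ^ 2 * y ^ 2 := by
      rw [integral_add (μ := μ) (f := fun p : ℝ × ℝ => 1 - p.1 - p.2)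
          (g := fun p : ℝ × ℝ => p.1 * p.2)
          (by exact ((integrable_const 1).sub hint1).sub hint2) hint12,
        integral_sub (μ := μ) (f := fun p : ℝ × ℝ => 1 - p.1)
          (g := fun p : ℝ × ℝ => p.2)
          (by exact (integrable_const 1).sub hint1) hint2,
        integral_sub (μ := μ) (f := fun _ : ℝ × ℝ => (1:ℝ))
          (g := fun p : ℝ × ℝ => p.1) (integrable_const 1) hint1, integral_const]
      simp [hμ1, hμ2, hμ12, measure_univ]
    rw [hcalc] at hnn
    refine (Real.le_sqrt' hy).2 ?_
    rw [le_div_iff₀ ha2]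
    nlinarith
  · intro hys
    have hy2 : y ^ 2 * (1 - a ^ 2) ≤ 1 - x ^ 2 := (le_div_iff₀ ha2).1 ((Real.le_sqrt' hy).1 hys)
    have hax : a * y < x := by
      rwa [div_lt_one hx] at hayx
    have h00 : 0 ≤ 1 - x ^ 2 - (1 - a ^ 2) * y ^ 2 := by nlinarith
    have h10 : 0 ≤ x ^ 2 - a ^ 2 * y ^ 2 := by nlinarith [mul_pos ha₀ hy]
    have h01 : 0 ≤ (1 - a ^ 2) * y ^ 2 := by positivity
    have h11 : 0 ≤ a ^ 2 * y ^ 2 := by positivity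
    refine ⟨ENNReal.ofReal (1 - x ^ 2 - (1 - a ^ 2) * y ^ 2) • Measure.dirac ((0:ℝ),(0:ℝ))
        + ENNReal.ofReal (x ^ 2 - a ^ 2 * y ^ 2) • Measure.dirac ((1:ℝ),(0:ℝ))
        + ENNReal.ofReal ((1 - a ^ 2) * y ^ 2) • Measure.dirac ((0:ℝ),(1:ℝ))
        + ENNReal.ofReal (a ^ 2 * y ^ 2) • Measure.dirac ((1:ℝ),(1:ℝ)), ?_, ?_, ?_, ?_, ?_⟩
    · refine ⟨?_⟩
      simp only [Measure.coe_add, Pi.add_apply, Measure.smul_apply, smul_eq_mul,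
        measure_univ, mul_one]
      rw [← ENNReal.ofReal_add h00 h10, ← ENNReal.ofReal_add (by linarith) h01,
        ← ENNReal.ofReal_add (by linarith) h11,
        show 1 - x ^ 2 - (1 - a ^ 2) * y ^ 2 + (x ^ 2 - a ^ 2 * y ^ 2) + (1 - a ^ 2) * y ^ 2
          + a ^ 2 * y ^ 2 = 1 by ring, ENNReal.ofReal_one]
    · simp only [Measure.coe_add, Pi.add_apply, Measure.smul_apply, smul_eq_mul,
        Measure.dirac_apply, Set.indicator_apply, Set.mem_compl_iff, Set.mem_prod,
        Set.mem_Icc]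
      norm_num
    · intro k₁ hk
      rw [stmt12_key _ _ _ _ h00 h10 h01 h11 (measurable_fst.pow_const k₁)]
      simp [zero_pow (by omega : k₁ ≠ 0)]
      try ring
    · intro k₂ hk
      rw [stmt12_key _ _ _ _ h00 h10 h01 h11 (measurable_snd.pow_const k₂)]
      simp [zero_pow (by omega : k₂ ≠ 0)]
      try ring
    · intro k₁ k₂ hk₁ hk₂
      rw [stmt12_key (f := fun p : ℝ × ℝ => p.1 ^ k₁ * p.2 ^ k₂) _ _ _ _ h00 h10 h01 h11
        ((measurable_fst.pow_const k₁).mul (measurable_snd.pow_const k₂))]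
      simp [zero_pow (by omega : k₁ ≠ 0), zero_pow (by omega : k₂ ≠ 0)]
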